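/- Let R : ℝ^n → ℝ be concave on the nonnegative orthant [0,∞)^n. Then the function G : ℝ^n × ℝ^d → [0,+∞] defined by G(a,Q) = B(R(a),Q) if a ∈ [0,∞)^n and G(a,Q) = +∞ otherwise is convex. If moreover R is continuous on [0,∞)^n, then G is lower semicontinuous. -/

import Mathlib

open scoped ENNReal RealInnerProductSpace
open MeasureTheory

open Classical in
/-- The Benamou–Brenier action density on `ℝ × ℝ^d`, with values in `[0,+∞]`. -/
noncomputable def BBdens (d : ℕ) (x : ℝ × EuclideanSpace ℝ (Fin d)) : ℝ≥0∞ :=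
  if 0 < x.1 then ENNReal.ofReal (‖x.2‖^2 / (2 * x.1))
  else if x.1 = 0 ∧ x.2 = 0 then 0 else ⊤

/-- `B(R(a), Q)` extended by `+∞` outside of the nonnegative orthant. -/
noncomputable def BBcomp (n d : ℕ) (R : EuclideanSpace ℝ (Fin n) → ℝ)
    (x : EuclideanSpace ℝ (Fin n) × EuclideanSpace ℝ (Fin d)) : ℝ≥0∞ :=
  if ∀ i, 0 ≤ x.1 i then BBdens d (R x.1, x.2) else ⊤

section aux

lemma BBdens_pos' {d : ℕ} {p : ℝ} (hp : 0 < p) (Q : EuclideanSpace ℝ (Fin d)) :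
    BBdens d (p, Q) = ENNReal.ofReal (‖Q‖^2 / (2 * p)) := by
  simp only [BBdens, if_pos hp]

lemma BBdens_zero' {d : ℕ} : BBdens d (0, 0) = 0 := by simp [BBdens]

lemma BBdens_top' {d : ℕ} {p : ℝ} {Q : EuclideanSpace ℝ (Fin d)}
    (h : ¬ 0 < p) (h2 : ¬ (p = 0 ∧ Q = 0)) : BBdens d (p, Q) = ⊤ := by
  simp only [BBdens, if_neg h, if_neg h2]

lemma BBdens_ne_top' {d : ℕ} {x : ℝ × EuclideanSpace ℝ (Fin d)} (h : BBdens d x ≠ ⊤) :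
    0 < x.1 ∨ (x.1 = 0 ∧ x.2 = 0) := by
  by_contra hc
  push_neg at hc
  exact h (BBdens_top' (not_lt.2 hc.1) (by intro h2; exact hc.2 h2.1 h2.2))

lemma BBdens_anti' {d : ℕ} (Q : EuclideanSpace ℝ (Fin d)) {p p' : ℝ} (h : p ≤ p') :
    BBdens d (p', Q) ≤ BBdens d (p, Q) := by
  by_cases hp : 0 < p
  · have hp' : 0 < p' := lt_of_lt_of_le hp h
    rw [BBdens_pos' hp, BBdens_pos' hp']
    exact ENNReal.ofReal_le_ofReal (by gcongr)
  · by_cases h2 : p = 0 ∧ Q = 0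
    · obtain ⟨rfl, rfl⟩ := h2
      by_cases hp' : 0 < p'
      · rw [BBdens_pos' hp']; simp
      · have : p' = 0 := le_antisymm (not_lt.1 hp') h
        subst this; simp [BBdens_zero']
    · rw [BBdens_top' hp h2]; exact le_top

lemma bb_core' {d : ℕ} {a b p q : ℝ} (Q Q' : EuclideanSpace ℝ (Fin d))
    (ha : 0 < a) (hb : 0 < b) (hp : 0 < p) (hq : 0 < q) :
    ‖a • Q + b • Q'‖^2 / (2 * (a*p + b*q)) ≤ a * (‖Q‖^2/(2*p)) + b * (‖Q'‖^2/(2*q)) := by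
  have hL : ‖a • Q + b • Q'‖ ≤ a*‖Q‖ + b*‖Q'‖ := by
    calc ‖a • Q + b • Q'‖ ≤ ‖a • Q‖ + ‖b • Q'‖ := norm_add_le _ _
    _ = a*‖Q‖ + b*‖Q'‖ := by
        rw [norm_smul, norm_smul, Real.norm_eq_abs, Real.norm_eq_abs,
          abs_of_pos ha, abs_of_pos hb]
  have h0 : (0:ℝ) ≤ ‖a • Q + b • Q'‖ := norm_nonneg _
  have hQ0 : (0:ℝ) ≤ ‖Q‖ := norm_nonneg _
  have hQ'0 : (0:ℝ) ≤ ‖Q'‖ := norm_nonneg _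
  rw [div_le_iff₀ (by positivity)]
  have e : a * (‖Q‖^2/(2*p)) + b*(‖Q'‖^2/(2*q)) = (a*‖Q‖^2*q + b*‖Q'‖^2*p)/(2*p*q) := by
    field_simp
  rw [e, div_mul_eq_mul_div, le_div_iff₀ (by positivity)]
  nlinarith [mul_nonneg (mul_pos ha hb).le (sq_nonneg (p*‖Q'‖ - q*‖Q‖)),
    mul_le_mul hL hL h0 (by positivity : (0:ℝ) ≤ a*‖Q‖ + b*‖Q'‖),
    mul_pos hp hq, sq_nonneg (a*‖Q‖+b*‖Q'‖)]

lemma BBdens_convex' {d : ℕ} (x y : ℝ × EuclideanSpace ℝ (Fin d)) {a b : ℝ}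
    (ha : 0 ≤ a) (hb : 0 ≤ b) (hab : a + b = 1) :
    BBdens d (a • x + b • y) ≤
      ENNReal.ofReal a * BBdens d x + ENNReal.ofReal b * BBdens d y := by
  have hcombo : a • x + b • y = (a * x.1 + b * y.1, a • x.2 + b • y.2) := rfl
  rcases eq_or_lt_of_le ha with rfl | ha
  · have hb1 : b = 1 := by linarith
    subst hb1
    simp
  rcases eq_or_lt_of_le hb with rfl | hb
  · have ha1 : a = 1 := by linarith
    subst ha1
    simp
  by_cases hx : BBdens d x = ⊤
  · rw [hx, ENNReal.mul_top (by simp [ha.not_ge] : ENNReal.ofReal a ≠ 0), top_add]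
    exact le_top
  by_cases hy : BBdens d y = ⊤
  · rw [hy, ENNReal.mul_top (by simp [hb.not_ge] : ENNReal.ofReal b ≠ 0), add_top]
    exact le_top
  rcases BBdens_ne_top' hx with hx1 | ⟨hx1, hx2⟩ <;> rcases BBdens_ne_top' hy with hy1 | ⟨hy1, hy2⟩
  · rw [hcombo, BBdens_pos' (by positivity),
      show BBdens d x = BBdens d (x.1, x.2) from rfl,
      show BBdens d y = BBdens d (y.1, y.2) from rfl,
      BBdens_pos' hx1, BBdens_pos' hy1]
    calc ENNReal.ofReal (‖a • x.2 + b • y.2‖^2 / (2 * (a * x.1 + b * y.1)))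
        ≤ ENNReal.ofReal (a * (‖x.2‖^2/(2*x.1)) + b * (‖y.2‖^2/(2*y.1))) :=
          ENNReal.ofReal_le_ofReal (bb_core' _ _ ha hb hx1 hy1)
      _ = _ := by
          rw [ENNReal.ofReal_add (by positivity) (by positivity),
            ENNReal.ofReal_mul ha.le, ENNReal.ofReal_mul hb.le]
  · rw [hcombo, hy1, hy2,
      show BBdens d y = BBdens d (y.1, y.2) from rfl, hy1, hy2, BBdens_zero', mul_zero, add_zero,
      show BBdens d x = BBdens d (x.1, x.2) from rfl, BBdens_pos' hx1]
    simp only [mul_zero, add_zero, smul_zero]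
    rw [BBdens_pos' (by positivity), ← ENNReal.ofReal_mul ha.le]
    apply ENNReal.ofReal_le_ofReal
    apply le_of_eq
    rw [norm_smul, Real.norm_eq_abs, abs_of_pos ha, mul_pow]
    field_simp
  · rw [hcombo, hx1, hx2,
      show BBdens d x = BBdens d (x.1, x.2) from rfl, hx1, hx2, BBdens_zero', mul_zero, zero_add,
      show BBdens d y = BBdens d (y.1, y.2) from rfl, BBdens_pos' hy1]
    simp only [mul_zero, zero_add, smul_zero]
    rw [BBdens_pos' (by positivity), ← ENNReal.ofReal_mul hb.le]
    apply ENNReal.ofReal_le_ofReal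
    apply le_of_eq
    rw [norm_smul, Real.norm_eq_abs, abs_of_pos hb, mul_pow]
    field_simp
  · rw [hcombo, hx1, hx2, hy1, hy2]
    simp only [mul_zero, add_zero, smul_zero, zero_add]
    rw [BBdens_zero']
    exact zero_le

lemma BBdens_lsc' {d : ℕ} : LowerSemicontinuous (BBdens d) := by
  intro x c hc
  rcases lt_trichotomy x.1 0 with h1 | h1 | h1
  · have hc' : c < ⊤ := lt_of_lt_of_le hc le_top
    have hev : ∀ᶠ y in nhds x, (y : ℝ × EuclideanSpace ℝ (Fin d)).1 < 0 :=
      (continuous_fst.tendsto x).eventually (eventually_lt_nhds h1)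
    filter_upwards [hev] with y hy
    rw [show BBdens d y = BBdens d (y.1, y.2) from rfl,
      BBdens_top' (not_lt.2 hy.le) (fun h => absurd h.1 hy.ne)]
    exact hc'
  · by_cases h2 : x.2 = 0
    · rw [show BBdens d x = BBdens d (x.1, x.2) from rfl, h1, h2, BBdens_zero'] at hc
      exact absurd hc (by simp)
    · have hc' : c < ⊤ := lt_of_lt_of_le hc le_top
      set r := c.toReal with hr
      have hr0 : 0 ≤ r := ENNReal.toReal_nonneg
      have hx2 : 0 < ‖x.2‖ := norm_pos_iff.2 h2
      set δ : ℝ := (‖x.2‖/2)^2 / (2*(r+1)) with hδ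
      have hδ0 : 0 < δ := by positivity
      have hevA : ∀ᶠ y in nhds x, ‖x.2‖/2 < ‖(y : ℝ × EuclideanSpace ℝ (Fin d)).2‖ :=
        (continuous_snd.norm.tendsto x).eventually (eventually_gt_nhds (by linarith))
      have hevB : ∀ᶠ y in nhds x, (y : ℝ × EuclideanSpace ℝ (Fin d)).1 < δ :=
        (continuous_fst.tendsto x).eventually (eventually_lt_nhds (h1 ▸ hδ0))
      filter_upwards [hevA, hevB] with y hyA hyB
      have hy2 : y.2 ≠ 0 := by
        intro h; rw [h, norm_zero] at hyA; linarith
      by_cases hy1 : 0 < y.1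
      · rw [show BBdens d y = BBdens d (y.1, y.2) from rfl, BBdens_pos' hy1]
        rw [gt_iff_lt, ENNReal.lt_ofReal_iff_toReal_lt hc'.ne]
        have : r + 1 ≤ ‖y.2‖^2 / (2*y.1) := by
          rw [le_div_iff₀ (by positivity)]
          have h3 : (‖x.2‖/2)^2 ≤ ‖y.2‖^2 := by nlinarith
          have h4 : (r+1) * (2*y.1) ≤ (r+1) * (2*δ) := by nlinarith
          calc (r+1) * (2*y.1) ≤ (r+1)*(2*δ) := h4
            _ = (‖x.2‖/2)^2 := by rw [hδ]; field_simp
            _ ≤ ‖y.2‖^2 := h3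
        linarith
      · rw [show BBdens d y = BBdens d (y.1, y.2) from rfl,
          BBdens_top' hy1 (fun h => hy2 h.2)]
        exact hc'
  · have hcont : ContinuousAt (fun y : ℝ × EuclideanSpace ℝ (Fin d) =>
        ENNReal.ofReal (‖y.2‖^2 / (2 * y.1))) x := by
      apply ENNReal.continuous_ofReal.continuousAt.comp
      exact (continuous_snd.norm.pow 2).continuousAt.div
        ((continuous_const.mul continuous_fst).continuousAt) (by positivity)
    have hx : BBdens d x = ENNReal.ofReal (‖x.2‖^2 / (2 * x.1)) := by
      rw [show BBdens d x = BBdens d (x.1, x.2) from rfl, BBdens_pos' h1]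
    rw [hx] at hc
    have hev1 : ∀ᶠ y in nhds x, c < ENNReal.ofReal (‖y.2‖^2 / (2 * y.1)) :=
      hcont (isOpen_Ioi.mem_nhds hc)
    have hev2 : ∀ᶠ y in nhds x, 0 < (y : ℝ × EuclideanSpace ℝ (Fin d)).1 :=
      (continuous_fst.tendsto x).eventually (eventually_gt_nhds h1)
    filter_upwards [hev1, hev2] with y hy1 hy2
    rwa [show BBdens d y = BBdens d (y.1, y.2) from rfl, BBdens_pos' hy2]

end aux

theorem BBcomp_convex_lsc (n d : ℕ) (hn : 1 ≤ n) (hd : 1 ≤ d)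
    (R : EuclideanSpace ℝ (Fin n) → ℝ)
    (hR : ConcaveOn ℝ {a : EuclideanSpace ℝ (Fin n) | ∀ i, 0 ≤ a i} R) :
    (∀ (x y : EuclideanSpace ℝ (Fin n) × EuclideanSpace ℝ (Fin d)) (a b : ℝ),
      0 ≤ a → 0 ≤ b → a + b = 1 →
      BBcomp n d R (a • x + b • y) ≤
        ENNReal.ofReal a * BBcomp n d R x + ENNReal.ofReal b * BBcomp n d R y) ∧
    (ContinuousOn R {a : EuclideanSpace ℝ (Fin n) | ∀ i, 0 ≤ a i} →
      LowerSemicontinuous (BBcomp n d R)) := by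
  classical
  set K : Set (EuclideanSpace ℝ (Fin n)) := {a | ∀ i, 0 ≤ a i} with hK
  constructor
  · intro x y a b ha hb hab
    rcases eq_or_lt_of_le ha with rfl | ha
    · have hb1 : b = 1 := by linarith
      subst hb1
      simp
    rcases eq_or_lt_of_le hb with rfl | hb
    · have ha1 : a = 1 := by linarith
      subst ha1
      simp
    by_cases hx : ∀ i, 0 ≤ x.1 i
    · by_cases hy : ∀ i, 0 ≤ y.1 i
      · have hcombo1 : (a • x + b • y).1 = a • x.1 + b • y.1 := rfl
        have hmem : ∀ i, 0 ≤ (a • x + b • y).1 i := by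
          intro i
          rw [hcombo1]
          simp only [PiLp.add_apply, PiLp.smul_apply, smul_eq_mul]
          have := hx i; have := hy i
          positivity
        have hconc : a * R x.1 + b * R y.1 ≤ R ((a • x + b • y).1) := by
          rw [hcombo1]
          have := hR.2 hx hy ha.le hb.le hab
          simpa [smul_eq_mul] using this
        rw [BBcomp, if_pos hmem, BBcomp, if_pos hx, BBcomp, if_pos hy]
        calc BBdens d (R ((a • x + b • y).1), (a • x + b • y).2)
            ≤ BBdens d (a * R x.1 + b * R y.1, (a • x + b • y).2) :=
              BBdens_anti' _ hconc
          _ = BBdens d (a • ((R x.1, x.2) : ℝ × EuclideanSpace ℝ (Fin d))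
                + b • ((R y.1, y.2) : ℝ × EuclideanSpace ℝ (Fin d))) := rfl
          _ ≤ ENNReal.ofReal a * BBdens d (R x.1, x.2)
                + ENNReal.ofReal b * BBdens d (R y.1, y.2) :=
              BBdens_convex' _ _ ha.le hb.le hab
      · rw [show BBcomp n d R y = ⊤ from if_neg hy,
          ENNReal.mul_top (by simp [hb.not_ge] : ENNReal.ofReal b ≠ 0), add_top]
        exact le_top
    · rw [show BBcomp n d R x = ⊤ from if_neg hx,
        ENNReal.mul_top (by simp [ha.not_ge] : ENNReal.ofReal a ≠ 0), top_add]
      exact le_top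
  · intro hRc
    have hKc : IsClosed K := by
      have : K = ⋂ i, {a : EuclideanSpace ℝ (Fin n) | 0 ≤ a i} := by
        ext a; simp [hK, Set.mem_iInter]
      rw [this]
      exact isClosed_iInter fun i =>
        isClosed_le continuous_const (EuclideanSpace.proj (𝕜 := ℝ) i).continuous
    set S : Set (EuclideanSpace ℝ (Fin n) × EuclideanSpace ℝ (Fin d)) := K ×ˢ Set.univ with hS
    have hSc : IsClosed S := hKc.prod isClosed_univ
    intro x c hc
    have hnhds : nhds x = nhdsWithin x S ⊔ nhdsWithin x Sᶜ := by
      rw [← nhdsWithin_union, Set.union_compl_self, nhdsWithin_univ]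
    by_cases hx : x ∈ S
    · have hx1 : ∀ i, 0 ≤ x.1 i := hx.1
      rw [BBcomp, if_pos hx1] at hc
      have hc' : c < ⊤ := lt_of_lt_of_le hc le_top
      -- within S
      have hφ : ContinuousWithinAt
          (fun y : EuclideanSpace ℝ (Fin n) × EuclideanSpace ℝ (Fin d) => (R y.1, y.2)) S x := by
        apply ContinuousWithinAt.prodMk
        · exact (hRc x.1 hx.1).comp continuousWithinAt_fst (fun y hy => hy.1)
        · exact continuousWithinAt_snd
      have hev : ∀ᶠ z in nhds ((R x.1, x.2) : ℝ × EuclideanSpace ℝ (Fin d)),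
          c < BBdens d z := BBdens_lsc' _ _ hc
      have hin : ∀ᶠ y in nhdsWithin x S, c < BBcomp n d R y := by
        have h1 := hφ.eventually hev
        filter_upwards [h1, self_mem_nhdsWithin] with y hy1 hy2
        rwa [BBcomp, if_pos (show ∀ i, 0 ≤ y.1 i from hy2.1)]
      have hout : ∀ᶠ y in nhdsWithin x Sᶜ, c < BBcomp n d R y := by
        filter_upwards [self_mem_nhdsWithin] with y hy
        have : ¬ ∀ i, 0 ≤ y.1 i := by
          intro h
          exact hy ⟨h, Set.mem_univ _⟩
        rw [BBcomp, if_neg this]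
        exact hc'
      rw [hnhds]
      exact Filter.eventually_sup.2 ⟨hin, hout⟩
    · have hx1 : ¬ ∀ i, 0 ≤ x.1 i := by
        intro h
        exact hx ⟨h, Set.mem_univ _⟩
      rw [BBcomp, if_neg hx1] at hc
      have hev : ∀ᶠ y in nhds x, y ∈ Sᶜ := hSc.isOpen_compl.mem_nhds hx
      filter_upwards [hev] with y hy
      have : ¬ ∀ i, 0 ≤ y.1 i := fun h => hy ⟨h, Set.mem_univ _⟩
      rw [BBcomp, if_neg this]
      exact hc
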